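/- Let k be a field and C the coalgebra with basis {α_n : n ∈ ℕ}, comultiplication Δ(α_n) = Σ_{i+j=n} α_i ⊗ α_j, and counit ε(α_n) = δ_{n,0}. If f : C → C is a coalgebra morphism, then f(α_0) = α_0 and there exist scalars λ_1, λ_2, ... in k such that for all n ≥ 1, f(α_n) = Σ_{r=1}^{n} (Σ_{n_1+...+n_r = n, each n_i ≥ 1} λ_{n_1}···λ_{n_r}) α_r. -/

import Mathlib

open scoped TensorProduct

def consC (n i : ℕ) (hi : 1 ≤ i) (hin : i ≤ n) (c : Composition (n - i)) :
    Composition n :=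
  ⟨i :: c.blocks, by
    intro j hj
    rcases List.mem_cons.1 hj with h | h
    · omega
    · exact c.blocks_pos h, by
    have := c.blocks_sum
    simp only [List.sum_cons, this]
    omega⟩

theorem headI_cons_tail (l : List ℕ) (h : l ≠ []) : l.headI :: l.tail = l := by
  cases l with
  | nil => exact absurd rfl h
  | cons a t => rfl

def tailC (n : ℕ) (c : Composition n) : Composition (n - c.blocks.headI) :=
  ⟨c.blocks.tail, fun hj => c.blocks_pos (List.mem_of_mem_tail hj), by
    have h := c.blocks_sum
    rcases hb : c.blocks with _ | ⟨a, l⟩ <;> rw [hb] at h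
    · simp only [List.sum_nil] at h
      simp [← h]
    · simp only [List.sum_cons] at h
      simp only [List.headI, List.tail]
      omega⟩

theorem comp_sum_rec {k : Type*} [CommSemiring k] (lam : ℕ → k) (n r : ℕ) :
    ∑ c ∈ Finset.univ.filter (fun c : Composition n => c.length = r + 1),
      (c.blocks.map lam).prod
    = ∑ i ∈ Finset.Icc 1 n, lam i *
        ∑ c ∈ Finset.univ.filter (fun c : Composition (n - i) => c.length = r),
          (c.blocks.map lam).prod := by
  have hrw : ∀ i ∈ Finset.Icc 1 n, lam i *
        ∑ c ∈ Finset.univ.filter (fun c : Composition (n - i) => c.length = r),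
          (c.blocks.map lam).prod
      = ∑ c ∈ Finset.univ.filter (fun c : Composition (n - i) => c.length = r),
          lam i * (c.blocks.map lam).prod := fun i _ => Finset.mul_sum _ _ _
  rw [Finset.sum_congr rfl hrw, Finset.sum_sigma']
  have hne : ∀ c : Composition n, c ∈ Finset.univ.filter
      (fun c : Composition n => c.length = r + 1) → c.blocks ≠ [] := by
    intro c hc h
    simp only [Finset.mem_filter, Composition.length] at hc
    rw [h] at hc
    simp at hc
  refine Finset.sum_bij'
    (i := fun c hc => (⟨c.blocks.headI, tailC n c⟩ :
      (i : ℕ) × Composition (n - i)))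
    (j := fun p hp => consC n p.1 ?_ ?_ p.2)
    ?_ ?_ ?_ ?_ ?_
  · exact (Finset.mem_Icc.1 (Finset.mem_sigma.1 hp).1).1
  · exact (Finset.mem_Icc.1 (Finset.mem_sigma.1 hp).1).2
  · -- forward membership
    intro c hc
    have hne := hne c hc
    simp only [Finset.mem_filter, Finset.mem_univ, true_and, Composition.length] at hc
    refine Finset.mem_sigma.2 ⟨Finset.mem_Icc.2 ⟨?_, ?_⟩, ?_⟩
    · show 1 ≤ c.blocks.headI
      rcases hb : c.blocks with _ | ⟨a, l⟩
      · exact absurd hb hne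
      · have := c.blocks_pos (by rw [hb]; exact List.mem_cons_self)
        simp [hb]; omega
    · have h := c.blocks_sum
      show c.blocks.headI ≤ n
      rcases hb : c.blocks with _ | ⟨a, l⟩
      · exact absurd hb hne
      · rw [hb] at h; simp only [List.sum_cons] at h; simp [hb]; omega
    · simp only [Finset.mem_filter, Finset.mem_univ, true_and, Composition.length, tailC]
      rw [List.length_tail, hc]; omega
  · -- backward membership
    intro p hp
    have h1 := (Finset.mem_Icc.1 (Finset.mem_sigma.1 hp).1).1
    have h2 := (Finset.mem_sigma.1 hp).2
    simp only [Finset.mem_filter, Finset.mem_univ, true_and, Composition.length] at h2 ⊢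
    simp [consC, h2]
  · -- left inverse
    intro c hc
    have hne := hne c hc
    apply Composition.ext
    simp only [consC, tailC]
    exact headI_cons_tail _ hne
  · -- right inverse
    intro p hp
    apply Sigma.ext
    · simp [consC]
    · exact heq_of_eq (Composition.ext (by simp [consC, tailC]))
  · -- values
    intro c hc
    have hne := hne c hc
    conv_lhs => rw [← headI_cons_tail c.blocks hne]
    simp [tailC]

/-- Any coalgebra endomorphism `f` of the loop path coalgebra (basis `α_n`,
`Δ(α_n) = Σ_{i+j=n} α_i ⊗ α_j`, `ε(α_n) = δ_{n,0}`) fixes `α_0` and is determined by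
scalars `λ_1, λ_2, …` via
`f(α_n) = Σ_{r=1}^{n} (Σ_{n_1+⋯+n_r=n, n_i ≥ 1} λ_{n_1}⋯λ_{n_r}) α_r` for all `n ≥ 1`.
The inner sum over positive compositions of `n` of length `r` is expressed with
Mathlib's `Composition n`. -/
theorem stmt_3 (k C : Type*) [Field k] [AddCommGroup C] [Module k C]
    (b : Module.Basis ℕ k C)
    (comul : C →ₗ[k] C ⊗[k] C) (counit : C →ₗ[k] k)
    (hcomul : ∀ n, comul (b n) = ∑ i ∈ Finset.range (n + 1), b i ⊗ₜ[k] b (n - i))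
    (hcounit : ∀ n, counit (b n) = if n = 0 then 1 else 0)
    (f : C →ₗ[k] C)
    (hf1 : comul ∘ₗ f = TensorProduct.map f f ∘ₗ comul)
    (hf2 : counit ∘ₗ f = counit) :
    f (b 0) = b 0 ∧
      ∃ lam : ℕ → k, ∀ n, 1 ≤ n →
        f (b n) = ∑ r ∈ Finset.Icc 1 n,
          (∑ c ∈ Finset.univ.filter (fun c : Composition n => c.length = r),
            (c.blocks.map lam).prod) • b r := by
  classical
  set A : ℕ → ℕ → k := fun n m => b.repr (f (b n)) m with hA
  set T := Module.Basis.tensorProduct b b with hT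
  -- counit is the coordinate at 0
  have hcu : ∀ x : C, counit x = b.repr x 0 := by
    intro x
    have : counit = b.coord 0 := by
      apply b.ext
      intro n
      rw [hcounit]
      simp [Module.Basis.coord_apply, Finsupp.single_apply]
    rw [this]; rfl
  -- counit condition
  have hA0 : ∀ n, A n 0 = if n = 0 then 1 else 0 := by
    intro n
    have := congrArg (fun g : C →ₗ[k] k => g (b n)) hf2
    simp only [LinearMap.comp_apply] at this
    rw [hcu, hcounit] at this
    exact this
  -- coefficient of comul at a tensor basis element
  have hTrepr : ∀ m p q : ℕ, T.repr (comul (b m)) (p, q) = if p + q = m then 1 else 0 := by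
    intro m p q
    rw [hcomul]
    rw [map_sum, Finsupp.finset_sum_apply]
    have : ∀ j ∈ Finset.range (m + 1),
        T.repr (b j ⊗ₜ[k] b (m - j)) (p, q)
        = (if j = p then (1:k) else 0) * (if m - j = q then 1 else 0) := by
      intro j _
      rw [hT, Module.Basis.tensorProduct_repr_tmul_apply]
      simp [Module.Basis.repr_self, Finsupp.single_apply, mul_comm]
    rw [Finset.sum_congr rfl this]
    by_cases h : p + q = m
    · rw [Finset.sum_eq_single p]
      · simp [h.symm]
      · intro j hj hjp; simp [hjp]
      · intro hp; exfalso; apply hp; rw [Finset.mem_range]; omega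
    · rw [if_neg h]
      apply Finset.sum_eq_zero
      intro j hj
      rw [Finset.mem_range] at hj
      by_cases h1 : j = p
      · subst h1
        have : ¬ (m - j = q) := by omega
        simp [this]
      · simp [h1]
  -- key recursion from the comultiplication condition
  have E : ∀ n p q : ℕ, A n (p + q) = ∑ i ∈ Finset.range (n + 1), A i p * A (n - i) q := by
    intro n p q
    have h := congrArg (fun g : C →ₗ[k] C ⊗[k] C => T.repr (g (b n)) (p, q)) hf1
    simp only [LinearMap.comp_apply] at h
    -- RHS of h
    have hrhs : T.repr (TensorProduct.map f f (comul (b n))) (p, q)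
        = ∑ i ∈ Finset.range (n + 1), A i p * A (n - i) q := by
      rw [hcomul, map_sum, map_sum, Finsupp.finset_sum_apply]
      apply Finset.sum_congr rfl
      intro i _
      rw [TensorProduct.map_tmul, hT, Module.Basis.tensorProduct_repr_tmul_apply]
      simp [hA, smul_eq_mul, mul_comm]
    -- LHS of h
    have hlhs : T.repr (comul (f (b n))) (p, q) = A n (p + q) := by
      conv_lhs => rw [← b.linearCombination_repr (f (b n))]
      rw [Finsupp.linearCombination_apply, Finsupp.sum, map_sum, map_sum, Finsupp.finset_sum_apply]
      have : ∀ m ∈ (b.repr (f (b n))).support,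
          T.repr (comul (b.repr (f (b n)) m • b m)) (p, q)
          = A n m * (if p + q = m then 1 else 0) := by
        intro m _
        rw [map_smul, map_smul, Finsupp.smul_apply, hTrepr]
        simp [hA, smul_eq_mul]
      rw [Finset.sum_congr rfl this]
      rw [Finset.sum_eq_single (p + q)]
      · simp
      · intro m _ hm; simp [Ne.symm hm]
      · intro hm
        rw [Finsupp.notMem_support_iff] at hm
        simp [hA, hm]
    rw [hlhs, hrhs] at h
    exact h
  -- f (b 0) = b 0
  have E0 : ∀ p q : ℕ, A 0 (p + q) = A 0 p * A 0 q := by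
    intro p q
    simpa using E 0 p q
  have hpow : ∀ m, A 0 m = (A 0 1) ^ m := by
    intro m
    induction m with
    | zero => simpa using hA0 0
    | succ m ih =>
      have h := E0 1 m
      rw [show 1 + m = m + 1 from by omega] at h
      rw [h, ih, pow_succ, mul_comm]
  have h01 : A 0 1 = 0 := by
    by_contra h
    obtain ⟨m, hm⟩ := Infinite.exists_notMem_finset (b.repr (f (b 0))).support
    rw [Finsupp.notMem_support_iff] at hm
    have hm' : A 0 m = 0 := hm
    rw [hpow] at hm'
    exact pow_ne_zero m h hm'
  have h0m : ∀ m, 1 ≤ m → A 0 m = 0 := by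
    intro m hm
    rw [hpow, h01, zero_pow (by omega)]
  have hf0 : f (b 0) = b 0 := by
    apply b.repr.injective
    ext m
    rw [b.repr_self, Finsupp.single_apply]
    rcases Nat.eq_zero_or_pos m with h | h
    · subst h
      simpa using hA0 0
    · rw [if_neg (by omega)]
      exact h0m m h
  set lam : ℕ → k := fun i => A i 1 with hlam
  have key : ∀ r, 1 ≤ r → ∀ n, A n r =
      ∑ c ∈ Finset.univ.filter (fun c : Composition n => c.length = r),
        (c.blocks.map lam).prod := by
    intro r
    induction r with
    | zero => intro h; omega
    | succ r ih =>
      rcases Nat.eq_zero_or_pos r with hr | hr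
      · subst hr
        intro _ n
        rcases Nat.eq_zero_or_pos n with hn | hn
        · subst hn
          have hempty : (Finset.univ.filter (fun c : Composition 0 => c.length = 1)) = ∅ := by
            rw [Finset.filter_eq_empty_iff]
            intro c _
            have := c.length_le
            omega
          rw [hempty, Finset.sum_empty]
          exact h0m 1 le_rfl
        · have hone : (Finset.univ.filter (fun c : Composition n => c.length = 1))
              = {Composition.single n hn} := by
            ext c
            simp [Composition.eq_single_iff_length hn]
          rw [hone, Finset.sum_singleton]
          simp [Composition.single, hlam]
      · intro _ n
        have step := E n 1 r
        rw [show 1 + r = r + 1 from by omega] at step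
        rw [step]
        have hsub : Finset.Icc 1 n ⊆ Finset.range (n + 1) := by
          intro i hi
          simp only [Finset.mem_Icc] at hi
          simp only [Finset.mem_range]
          omega
        have hzero : ∀ i ∈ Finset.range (n + 1), i ∉ Finset.Icc 1 n →
            A i 1 * A (n - i) r = 0 := by
          intro i h1 h2
          have hi0 : i = 0 := by
            simp only [Finset.mem_range] at h1
            simp only [Finset.mem_Icc] at h2
            omega
          subst hi0
          rw [h01, zero_mul]
        rw [← Finset.sum_subset hsub hzero, comp_sum_rec]
        apply Finset.sum_congr rfl
        intro i hi
        rw [ih hr (n - i)]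
  refine ⟨hf0, lam, ?_⟩
  intro n hn
  apply b.repr.injective
  ext m
  rw [map_sum, Finsupp.finset_sum_apply]
  have hterm : ∀ r ∈ Finset.Icc 1 n,
      (b.repr ((∑ c ∈ Finset.univ.filter (fun c : Composition n => c.length = r),
        (c.blocks.map lam).prod) • b r)) m
      = (∑ c ∈ Finset.univ.filter (fun c : Composition n => c.length = r),
        (c.blocks.map lam).prod) * (if r = m then 1 else 0) := by
    intro r _
    rw [map_smul, b.repr_self]
    simp [Finsupp.single_apply]
  rw [Finset.sum_congr rfl hterm]
  by_cases hm : m ∈ Finset.Icc 1 n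
  · rw [Finset.sum_eq_single m]
    · rw [if_pos rfl, mul_one]
      exact key m (Finset.mem_Icc.1 hm).1 n
    · intro r _ hrm
      rw [if_neg hrm, mul_zero]
    · intro h
      exact absurd hm h
  · rw [Finset.sum_eq_zero (fun r hr => by
      rw [if_neg, mul_zero]
      rintro rfl
      exact hm hr)]
    simp only [Finset.mem_Icc, not_and, not_le] at hm
    rcases Nat.eq_zero_or_pos m with h | h
    · subst h
      have := hA0 n
      rw [if_neg (by omega)] at this
      exact this
    · have hnm : n < m := hm h
      show A n m = 0
      rw [key m h n]
      have hempty : (Finset.univ.filter (fun c : Composition n => c.length = m)) = ∅ := by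
        rw [Finset.filter_eq_empty_iff]
        intro c _
        have := c.length_le
        omega
      rw [hempty, Finset.sum_empty]
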